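/- arXiv:2212.05955 — 2 statements merged into one kernel-verified Lean document; each statement's English description precedes it below -/
import Mathlib

section
/- Let Θ ⊆ ℝ^d be convex, f : Θ → ℝ be ξ⁻¹-strongly convex on Θ for some ξ ∈ (0,∞), and π = Z⁻¹ exp(−f) the corresponding target density. For the random walk Metropolis-Hastings chain with Gaussian proposal N(θ, h I_d), for any θ₀ ∈ Θ and any subgradient v ∈ ∂f(θ₀), the acceptance probability satisfies A(θ₀) ≤ (1 + h/ξ)^{−d/2} exp{ (h/2) (1/(1 + h/ξ)) ‖v‖₂² }. -/
open MeasureTheory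

/-- The Metropolis-Hastings acceptance function
`a_MH(θ,θ') = min(π(θ')q(θ',θ)/(π(θ)q(θ,θ')), 1)`, equal to `1` when `π(θ)q(θ,θ') = 0`. -/
noncomputable def mhAcceptFn {α : Type*} (pi : α → ℝ) (q : α → α → ℝ) (θ θ' : α) : ℝ :=
  if 0 < pi θ * q θ θ' then min ((pi θ' * q θ' θ) / (pi θ * q θ θ')) 1 else 1

/-- The Metropolis-Hastings acceptance probability `A(θ) = ∫ a_MH(θ,θ') q(θ,θ') dλ(θ')`. -/
noncomputable def mhAcceptProb {α : Type*} [MeasurableSpace α] (lam : Measure α)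
    (pi : α → ℝ) (q : α → α → ℝ) (θ : α) : ℝ :=
  ∫ θ', mhAcceptFn pi q θ θ' * q θ θ' ∂lam

/-- The Metropolis-Hastings Markov kernel
`P(θ,B) = ∫_B a_MH(θ,θ') q(θ,θ') dλ(θ') + δ_θ(B)(1 − A(θ))`. -/
noncomputable def mhKernel {α : Type*} [MeasurableSpace α] (lam : Measure α)
    (pi : α → ℝ) (q : α → α → ℝ) (θ : α) : Measure α :=
  lam.withDensity (fun θ' => ENNReal.ofReal (mhAcceptFn pi q θ θ' * q θ θ')) +
    (ENNReal.ofReal (1 - mhAcceptProb lam pi q θ)) • Measure.dirac θ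

/-- The `t`-step iterate `P^t(θ,·)` of a Markov kernel, with `P^0(θ,·) = δ_θ`. -/
noncomputable def iterK {Ω : Type*} [MeasurableSpace Ω] (P : Ω → Measure Ω) :
    ℕ → Ω → Measure Ω
  | 0 => fun θ => Measure.dirac θ
  | (t + 1) => fun θ => (iterK P t θ).bind P

/-- Total variation distance:
`‖μ − ν‖_TV = sup { ∫ f dμ − ∫ f dν : f measurable, 0 ≤ f ≤ 1 }`. -/
noncomputable def tvDist {Ω : Type*} [MeasurableSpace Ω] (μ ν : Measure Ω) : ℝ :=
  ⨆ f : {f : Ω → ℝ // Measurable f ∧ ∀ x, f x ∈ Set.Icc (0:ℝ) 1},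
    (∫ x, f.1 x ∂μ - ∫ x, f.1 x ∂ν)

/-- The Gaussian random walk proposal density
`q(θ,θ') = (2πh)^{−d/2} exp(−‖θ'−θ‖₂²/(2h))` of `N(θ, h I_d)`. -/
noncomputable def rwProposal (h : ℝ) (d : ℕ) (θ θ' : Fin d → ℝ) : ℝ :=
  (2 * Real.pi * h) ^ (-(d : ℝ) / 2) * Real.exp (-(∑ i, (θ' i - θ i) ^ 2) / (2 * h))

/-- The log-concave target density `π = Z⁻¹ exp(−f)` on `Θ` (and `0` off `Θ`), where
`Z = ∫_Θ exp(−f)`. -/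
noncomputable def logConcaveTarget {d : ℕ} (Θ : Set (Fin d → ℝ))
    (f : (Fin d → ℝ) → ℝ) : (Fin d → ℝ) → ℝ :=
  Θ.indicator (fun θ => Real.exp (-f θ) / ∫ x in Θ, Real.exp (-f x))


lemma gauss_lin_eq {a : ℝ} (ha : 0 < a) (b : ℝ) :
    (fun x : ℝ => Real.exp (-a * x ^ 2 + b * x)) =
      fun x => Real.exp (b ^ 2 / (4 * a)) * Real.exp (-a * (x - b / (2 * a)) ^ 2) := by
  funext x
  rw [← Real.exp_add]
  congr 1
  field_simp
  ring

lemma gauss_lin_integrable {a : ℝ} (ha : 0 < a) (b : ℝ) :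
    Integrable (fun x : ℝ => Real.exp (-a * x ^ 2 + b * x)) := by
  rw [gauss_lin_eq ha b]
  exact ((integrable_exp_neg_mul_sq ha).comp_sub_right _).const_mul _

lemma gauss_lin_integral {a : ℝ} (ha : 0 < a) (b : ℝ) :
    ∫ x : ℝ, Real.exp (-a * x ^ 2 + b * x) =
      Real.sqrt (Real.pi / a) * Real.exp (b ^ 2 / (4 * a)) := by
  rw [gauss_lin_eq ha b, integral_const_mul,
    integral_sub_right_eq_self (fun x => Real.exp (-a * x ^ 2)) (b / (2 * a)),
    integral_gaussian]
  ring

lemma strong_subgrad {d : ℕ} {ξ : ℝ} (hξ : 0 < ξ) {Θ : Set (Fin d → ℝ)} (hΘconv : Convex ℝ Θ)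
    {f : (Fin d → ℝ) → ℝ}
    (hsc : ConvexOn ℝ Θ (fun θ => f θ - (∑ i, θ i ^ 2) / (2 * ξ)))
    {θ₀ : Fin d → ℝ} (hθ₀ : θ₀ ∈ Θ) {v : Fin d → ℝ}
    (hv : ∀ θ ∈ Θ, f θ₀ + ∑ i, v i * (θ i - θ₀ i) ≤ f θ)
    {θ' : Fin d → ℝ} (hθ' : θ' ∈ Θ) :
    f θ₀ + ∑ i, v i * (θ' i - θ₀ i) + (∑ i, (θ' i - θ₀ i) ^ 2) / (2 * ξ) ≤ f θ' := by
  set W : ℝ := ∑ i, v i * (θ' i - θ₀ i) with hW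
  set P : ℝ := ∑ i, (θ' i - θ₀ i) ^ 2 with hP
  have hPnn : 0 ≤ P := Finset.sum_nonneg fun i _ => sq_nonneg _
  have h2ξ : (0:ℝ) < 2 * ξ := by linarith
  have key : ∀ t : ℝ, 0 < t → t < 1 →
      (1 - t) * (P / (2 * ξ)) ≤ f θ' - f θ₀ - W := by
    intro t ht0 ht1
    set θt : Fin d → ℝ := (1 - t) • θ₀ + t • θ' with hθt
    have hθti : ∀ i, θt i = (1 - t) * θ₀ i + t * θ' i := by
      intro i; simp [hθt]
    have hmem : θt ∈ Θ := hΘconv hθ₀ hθ' (by linarith) ht0.le (by ring)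
    have hsub := hv θt hmem
    have hconv := hsc.2 hθ₀ hθ' (show (0:ℝ) ≤ 1 - t by linarith) ht0.le (by ring)
    simp only [smul_eq_mul] at hconv
    have e1 : ∑ i, v i * (θt i - θ₀ i) = t * W := by
      rw [hW, Finset.mul_sum]
      refine Finset.sum_congr rfl fun i _ => ?_
      rw [hθti i]; ring
    have e2 : ∑ i, (θt i) ^ 2 =
        (1 - t) * ∑ i, (θ₀ i) ^ 2 + t * ∑ i, (θ' i) ^ 2 - t * (1 - t) * P := by
      rw [hP, Finset.mul_sum, Finset.mul_sum, Finset.mul_sum, ← Finset.sum_add_distrib,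
        ← Finset.sum_sub_distrib]
      refine Finset.sum_congr rfl fun i _ => ?_
      rw [hθti i]; ring
    rw [e1] at hsub
    have hconv' : f θt - (∑ i, (θt i) ^ 2) / (2 * ξ) ≤
        (1 - t) * (f θ₀ - (∑ i, (θ₀ i) ^ 2) / (2 * ξ)) +
          t * (f θ' - (∑ i, (θ' i) ^ 2) / (2 * ξ)) := hconv
    rw [e2] at hconv'
    have hQ0 : (((1 - t) * ∑ i, (θ₀ i) ^ 2 + t * ∑ i, (θ' i) ^ 2 - t * (1 - t) * P)) / (2 * ξ)
        = (1 - t) * ((∑ i, (θ₀ i) ^ 2) / (2 * ξ)) + t * ((∑ i, (θ' i) ^ 2) / (2 * ξ))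
          - t * (1 - t) * (P / (2 * ξ)) := by
      field_simp
    rw [hQ0] at hconv'
    have hsum : t * W + t * ((1 - t) * (P / (2 * ξ))) ≤ t * (f θ' - f θ₀) := by
      nlinarith [hsub, hconv']
    have := (mul_le_mul_iff_right₀ ht0).mp
      (show t * (W + (1 - t) * (P / (2 * ξ))) ≤ t * (f θ' - f θ₀) by nlinarith [hsum])
    linarith
  have hSD : P / (2 * ξ) ≤ f θ' - f θ₀ - W := by
    set S : ℝ := P / (2 * ξ) with hS
    have hSnn : 0 ≤ S := div_nonneg hPnn h2ξ.le
    refine le_of_forall_pos_le_add fun ε hε => ?_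
    have hS1 : (0:ℝ) < S + 1 := by linarith
    set t : ℝ := min (1/2) (ε / (S + 1)) with ht
    have ht0 : 0 < t := lt_min (by norm_num) (div_pos hε hS1)
    have ht1 : t < 1 := lt_of_le_of_lt (min_le_left _ _) (by norm_num)
    have hk := key t ht0 ht1
    have htS : t * S ≤ ε := by
      have h1 : t ≤ ε / (S + 1) := min_le_right _ _
      have h2 : t * S ≤ (ε / (S + 1)) * S :=
        mul_le_mul_of_nonneg_right h1 hSnn
      have h3 : (ε / (S + 1)) * S ≤ ε := by
        rw [div_mul_eq_mul_div, div_le_iff₀ hS1]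
        nlinarith [hε.le, hSnn]
      linarith
    nlinarith [hk, htS]
  linarith

/-- Proposition 3: for RWMH with proposal `N(θ, h I_d)` and a `ξ⁻¹`-strongly convex
potential `f` on convex `Θ`, for any `θ₀ ∈ Θ` and any subgradient `v ∈ ∂f(θ₀)`,
`A(θ₀) ≤ (1 + h/ξ)^{−d/2} exp((h/2)(1/(1+h/ξ))‖v‖₂²)`. -/
theorem rwmh_strongly_convex_accept_bound
    {d : ℕ} (hd : 0 < d) (h ξ : ℝ) (hh : 0 < h) (hξ : 0 < ξ)
    (Θ : Set (Fin d → ℝ)) (hΘne : Θ.Nonempty) (hΘconv : Convex ℝ Θ)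
    (hΘmeas : MeasurableSet Θ)
    (f : (Fin d → ℝ) → ℝ) (hfm : Measurable f)
    (hsc : ConvexOn ℝ Θ (fun θ => f θ - (∑ i, θ i ^ 2) / (2 * ξ)))
    (hfint : IntegrableOn (fun θ => Real.exp (-f θ)) Θ volume)
    (hZ : 0 < ∫ x in Θ, Real.exp (-f x))
    (θ₀ : Fin d → ℝ) (hθ₀ : θ₀ ∈ Θ)
    (v : Fin d → ℝ)
    (hv : ∀ θ ∈ Θ, f θ₀ + ∑ i, v i * (θ i - θ₀ i) ≤ f θ) :
    mhAcceptProb volume (logConcaveTarget Θ f) (rwProposal h d) θ₀ ≤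
      (1 + h / ξ) ^ (-(d : ℝ) / 2) *
        Real.exp (h / 2 * (1 / (1 + h / ξ)) * ∑ i, v i ^ 2) := by
  have hZne : (∫ x in Θ, Real.exp (-f x)) ≠ 0 := ne_of_gt hZ
  set Z : ℝ := ∫ x in Θ, Real.exp (-f x) with hZdef
  have hα : (0:ℝ) < 1 / (2 * h) + 1 / (2 * ξ) := by positivity
  set α : ℝ := 1 / (2 * h) + 1 / (2 * ξ) with hαdef
  set g : Fin d → ℝ → ℝ :=
    fun i x => Real.exp (-α * (x - θ₀ i) ^ 2 + (-v i) * (x - θ₀ i)) with hgdef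
  set G : (Fin d → ℝ) → ℝ :=
    fun θ' => (2 * Real.pi * h) ^ (-(d : ℝ) / 2) * ∏ i, g i (θ' i) with hGdef
  have h2πh : (0:ℝ) < 2 * Real.pi * h := by positivity
  have hCpos : (0:ℝ) < (2 * Real.pi * h) ^ (-(d : ℝ) / 2) := Real.rpow_pos_of_pos h2πh _
  have hqpos : ∀ θ θ' : Fin d → ℝ, 0 < rwProposal h d θ θ' := by
    intro θ θ'
    exact mul_pos (Real.rpow_pos_of_pos h2πh _) (Real.exp_pos _)
  have hqsymm : ∀ θ θ' : Fin d → ℝ, rwProposal h d θ θ' = rwProposal h d θ' θ := by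
    intro θ θ'
    unfold rwProposal
    have hs : ∑ i, (θ' i - θ i) ^ 2 = ∑ i, (θ i - θ' i) ^ 2 :=
      Finset.sum_congr rfl fun i _ => by ring
    rw [hs]
  have hπ₀ : logConcaveTarget Θ f θ₀ = Real.exp (-f θ₀) / Z := by
    unfold logConcaveTarget
    rw [Set.indicator_of_mem hθ₀]
  have hπ₀pos : 0 < logConcaveTarget Θ f θ₀ := by
    rw [hπ₀]; positivity
  -- pointwise bound of the integrand by a Gaussian with linear term
  have hpt : ∀ θ' : Fin d → ℝ,
      mhAcceptFn (logConcaveTarget Θ f) (rwProposal h d) θ₀ θ' * rwProposal h d θ₀ θ'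
        ≤ G θ' := by
    intro θ'
    have hGnn : 0 ≤ G θ' := by
      apply mul_nonneg hCpos.le
      exact Finset.prod_nonneg fun i _ => (Real.exp_pos _).le
    have hq := hqpos θ₀ θ'
    have hcond : 0 < logConcaveTarget Θ f θ₀ * rwProposal h d θ₀ θ' := mul_pos hπ₀pos hq
    unfold mhAcceptFn
    rw [if_pos hcond]
    by_cases hmem : θ' ∈ Θ
    · have hπ' : logConcaveTarget Θ f θ' = Real.exp (-f θ') / Z := by
        unfold logConcaveTarget; rw [Set.indicator_of_mem hmem]
      have step1 : min ((logConcaveTarget Θ f θ' * rwProposal h d θ' θ₀) /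
            (logConcaveTarget Θ f θ₀ * rwProposal h d θ₀ θ')) 1 * rwProposal h d θ₀ θ'
          ≤ ((logConcaveTarget Θ f θ' * rwProposal h d θ' θ₀) /
            (logConcaveTarget Θ f θ₀ * rwProposal h d θ₀ θ')) * rwProposal h d θ₀ θ' :=
        mul_le_mul_of_nonneg_right (min_le_left _ _) hq.le
      have step2 : ((logConcaveTarget Θ f θ' * rwProposal h d θ' θ₀) /
            (logConcaveTarget Θ f θ₀ * rwProposal h d θ₀ θ')) * rwProposal h d θ₀ θ'
          = Real.exp (f θ₀ - f θ') * rwProposal h d θ₀ θ' := by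
        rw [hπ', hπ₀, hqsymm θ' θ₀]
        have hE : Real.exp (f θ₀ - f θ') = Real.exp (-f θ') / Real.exp (-f θ₀) := by
          rw [← Real.exp_sub]; ring_nf
        rw [hE]
        field_simp
      have hsg := strong_subgrad hξ hΘconv hsc hθ₀ hv hmem
      have step3 : Real.exp (f θ₀ - f θ') * rwProposal h d θ₀ θ'
          ≤ Real.exp (-(∑ i, v i * (θ' i - θ₀ i))
              - (∑ i, (θ' i - θ₀ i) ^ 2) / (2 * ξ)) * rwProposal h d θ₀ θ' := by
        apply mul_le_mul_of_nonneg_right _ hq.le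
        exact Real.exp_le_exp.2 (by linarith)
      have step4 : Real.exp (-(∑ i, v i * (θ' i - θ₀ i))
              - (∑ i, (θ' i - θ₀ i) ^ 2) / (2 * ξ)) * rwProposal h d θ₀ θ' = G θ' := by
        rw [hGdef]
        simp only [hgdef, rwProposal]
        rw [← Real.exp_sum]
        rw [mul_left_comm, ← Real.exp_add]
        congr 1
        have hs1 : ∑ i, (-α * (θ' i - θ₀ i) ^ 2 + (-v i) * (θ' i - θ₀ i))
            = -α * (∑ i, (θ' i - θ₀ i) ^ 2) - ∑ i, v i * (θ' i - θ₀ i) := by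
          rw [Finset.sum_add_distrib, ← Finset.mul_sum, sub_eq_add_neg,
            ← Finset.sum_neg_distrib]
          congr 1
          exact Finset.sum_congr rfl fun i _ => by ring
        rw [hs1, hαdef]
        field_simp
        ring
      calc min ((logConcaveTarget Θ f θ' * rwProposal h d θ' θ₀) /
            (logConcaveTarget Θ f θ₀ * rwProposal h d θ₀ θ')) 1 * rwProposal h d θ₀ θ'
          ≤ _ := step1
        _ = _ := step2
        _ ≤ _ := step3
        _ = G θ' := step4
    · have hπ' : logConcaveTarget Θ f θ' = 0 := by
        unfold logConcaveTarget; rw [Set.indicator_of_notMem hmem]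
      rw [hπ', zero_mul, zero_div, min_eq_left zero_le_one, zero_mul]
      exact hGnn
  -- integrability of the Gaussian bound
  have hgint : ∀ i, Integrable (g i) volume :=
    fun i => (gauss_lin_integrable hα (-v i)).comp_sub_right (θ₀ i)
  have hGint : Integrable G volume := by
    rw [hGdef]
    exact (Integrable.fintype_prod (f := g) hgint).const_mul _
  -- the acceptance probability is at most the integral of the bound
  have hmono : mhAcceptProb volume (logConcaveTarget Θ f) (rwProposal h d) θ₀
      ≤ ∫ θ', G θ' := by
    unfold mhAcceptProb
    apply integral_mono_of_nonneg _ hGint (Filter.Eventually.of_forall hpt)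
    apply Filter.Eventually.of_forall
    intro θ'
    apply mul_nonneg _ (hqpos θ₀ θ').le
    unfold mhAcceptFn
    split_ifs with hc
    · refine le_min (div_nonneg ?_ hc.le) zero_le_one
      apply mul_nonneg _ (hqpos θ' θ₀).le
      exact Set.indicator_nonneg (fun x _ => div_nonneg (Real.exp_pos _).le hZ.le) _
    · exact zero_le_one
  -- compute the Gaussian integral
  have hone : ∀ i, ∫ x : ℝ, g i x
      = Real.sqrt (Real.pi / α) * Real.exp ((v i) ^ 2 / (4 * α)) := by
    intro i
    have h1 : ∫ x : ℝ, g i x = ∫ x : ℝ, Real.exp (-α * x ^ 2 + (-v i) * x) :=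
      integral_sub_right_eq_self (fun y => Real.exp (-α * y ^ 2 + (-v i) * y)) (θ₀ i)
    rw [h1, gauss_lin_integral hα (-v i), neg_pow]
    norm_num
  have hGval : ∫ θ', G θ' = (2 * Real.pi * h) ^ (-(d : ℝ) / 2) *
      ((Real.sqrt (Real.pi / α)) ^ d * Real.exp (∑ i, (v i) ^ 2 / (4 * α))) := by
    rw [hGdef]
    rw [integral_const_mul]
    rw [MeasureTheory.integral_fintype_prod_volume_eq_prod g]
    congr 1
    rw [Finset.prod_congr rfl fun i _ => hone i, Finset.prod_mul_distrib,
      Finset.prod_const, ← Real.exp_sum]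
    simp [Finset.card_univ]
  -- final algebra
  have h1hξ : (0:ℝ) < 1 + h / ξ := by positivity
  have hπα : (0:ℝ) < Real.pi / α := by positivity
  have hexp : ∑ i, (v i) ^ 2 / (4 * α) = h / 2 * (1 / (1 + h / ξ)) * ∑ i, v i ^ 2 := by
    rw [← Finset.sum_div, hαdef]
    field_simp
    ring
  have hpow : (Real.sqrt (Real.pi / α)) ^ d = (Real.pi / α) ^ ((d : ℝ) / 2) := by
    rw [Real.sqrt_eq_rpow, ← Real.rpow_natCast ((Real.pi / α) ^ ((1:ℝ)/2)) d,
      ← Real.rpow_mul hπα.le]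
    congr 1
    ring
  have hprod : (Real.pi / α) * (1 + h / ξ) = 2 * Real.pi * h := by
    rw [hαdef]
    field_simp
  have hfinal : (2 * Real.pi * h) ^ (-(d : ℝ) / 2) *
      ((Real.sqrt (Real.pi / α)) ^ d * Real.exp (∑ i, (v i) ^ 2 / (4 * α)))
      = (1 + h / ξ) ^ (-(d : ℝ) / 2) *
        Real.exp (h / 2 * (1 / (1 + h / ξ)) * ∑ i, v i ^ 2) := by
    rw [hexp, hpow, ← mul_assoc]
    congr 1
    have hA : (0:ℝ) < (Real.pi / α) ^ ((d : ℝ) / 2) := Real.rpow_pos_of_pos hπα _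
    have hB : (0:ℝ) < (1 + h / ξ) ^ ((d : ℝ) / 2) := Real.rpow_pos_of_pos h1hξ _
    rw [show -(d : ℝ) / 2 = -((d : ℝ) / 2) by ring, Real.rpow_neg h2πh.le,
      Real.rpow_neg h1hξ.le, ← hprod, Real.mul_rpow hπα.le h1hξ.le]
    field_simp
  rw [hGval, hfinal] at hmono
  exact hmono
end

section
/- Let Θ ⊆ ℝ^d be convex, f : Θ → ℝ be ξ⁻¹-strongly convex on Θ for some ξ ∈ (0,∞), and π = Z⁻¹ exp(−f). If θ* is the point maximizing π, then the random walk Metropolis-Hastings chain with Gaussian proposal N(θ, h I_d) satisfies A(θ*) ≤ (1 + h/ξ)^{−d/2}, and hence for every t ∈ ℤ₊, ‖P^t(θ*,·) − Π‖_TV ≥ (1 − (1 + h/ξ)^{−d/2})^t. -/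
open MeasureTheory

section AuxRWMH
open Real


lemma gauss_integral_1d (c : ℝ) (hc : 0 < c) (a : ℝ) :
    (∫ x : ℝ, Real.exp (-c⁻¹ * (x - a) ^ 2)) = Real.sqrt (Real.pi * c) := by
  rw [integral_sub_right_eq_self (fun x => Real.exp (-c⁻¹ * x ^ 2)) a,
    integral_gaussian, div_inv_eq_mul]

lemma gauss_integrable_1d (c : ℝ) (hc : 0 < c) (a : ℝ) :
    Integrable (fun x : ℝ => Real.exp (-c⁻¹ * (x - a) ^ 2)) :=
  (integrable_exp_neg_mul_sq (by positivity)).comp_sub_right a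

lemma gauss_rewrite {d : ℕ} (c : ℝ) (hc : 0 < c) (a x : Fin d → ℝ) :
    Real.exp (-(∑ i, (x i - a i) ^ 2) / c) = ∏ i, Real.exp (-c⁻¹ * (x i - a i) ^ 2) := by
  rw [← Real.exp_sum]
  congr 1
  rw [neg_div, Finset.sum_div, ← Finset.sum_neg_distrib]
  exact Finset.sum_congr rfl fun i _ => by field_simp

lemma gauss_integrable (d : ℕ) (c : ℝ) (hc : 0 < c) (a : Fin d → ℝ) :
    Integrable (fun x : Fin d → ℝ => Real.exp (-(∑ i, (x i - a i) ^ 2) / c)) := by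
  have := Integrable.fintype_prod (f := fun (i : Fin d) (y : ℝ) => Real.exp (-c⁻¹ * (y - a i) ^ 2))
    (fun i => gauss_integrable_1d c hc (a i))
  refine this.congr (Filter.Eventually.of_forall fun x => ?_)
  simp only []
  rw [← gauss_rewrite c hc]

lemma gauss_integral (d : ℕ) (c : ℝ) (hc : 0 < c) (a : Fin d → ℝ) :
    (∫ x : Fin d → ℝ, Real.exp (-(∑ i, (x i - a i) ^ 2) / c)) =
      (Real.pi * c) ^ ((d : ℝ) / 2) := by
  calc (∫ x : Fin d → ℝ, Real.exp (-(∑ i, (x i - a i) ^ 2) / c))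
      = ∫ x : Fin d → ℝ, ∏ i, Real.exp (-c⁻¹ * (x i - a i) ^ 2) := by
        congr 1; ext x; rw [gauss_rewrite c hc]
    _ = ∏ i : Fin d, ∫ y : ℝ, Real.exp (-c⁻¹ * (y - a i) ^ 2) :=
        integral_fintype_prod_eq_prod (fun i (y : ℝ) => Real.exp (-c⁻¹ * (y - a i) ^ 2))
    _ = Real.sqrt (Real.pi * c) ^ d := by
        simp only [gauss_integral_1d c hc, Finset.prod_const, Finset.card_univ, Fintype.card_fin]
    _ = (Real.pi * c) ^ ((d : ℝ) / 2) := by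
        rw [Real.sqrt_eq_rpow, ← Real.rpow_natCast (_ ^ _) d, ← Real.rpow_mul (by positivity)]
        congr 1; ring

lemma rw_meas (h : ℝ) (d : ℕ) :
    Measurable (fun p : (Fin d → ℝ) × (Fin d → ℝ) => rwProposal h d p.1 p.2) := by
  unfold rwProposal
  fun_prop

lemma rw_pos (h : ℝ) (hh : 0 < h) (d : ℕ) (θ θ' : Fin d → ℝ) : 0 < rwProposal h d θ θ' :=
  mul_pos (Real.rpow_pos_of_pos (by positivity) _) (Real.exp_pos _)

lemma rw_symm (h : ℝ) (d : ℕ) (θ θ' : Fin d → ℝ) : rwProposal h d θ' θ = rwProposal h d θ θ' := by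
  unfold rwProposal
  have : ∑ i, (θ i - θ' i) ^ 2 = ∑ i, (θ' i - θ i) ^ 2 :=
    Finset.sum_congr rfl fun i _ => by ring
  rw [this]

lemma mh_meas {α : Type*} [MeasurableSpace α] {pi : α → ℝ} {q : α → α → ℝ}
    (hpi : Measurable pi) (hq : Measurable (fun p : α × α => q p.1 p.2)) :
    Measurable (fun p : α × α => mhAcceptFn pi q p.1 p.2 * q p.1 p.2) := by
  unfold mhAcceptFn
  have h1 : Measurable (fun p : α × α => pi p.1 * q p.1 p.2) :=
    (hpi.comp measurable_fst).mul hq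
  have h2 : Measurable (fun p : α × α => pi p.2 * q p.2 p.1) :=
    (hpi.comp measurable_snd).mul (hq.comp measurable_swap)
  exact (Measurable.ite (measurableSet_lt measurable_const h1)
    ((h2.div h1).min measurable_const) measurable_const).mul hq

lemma mh_mem {α : Type*} (pi : α → ℝ) (q : α → α → ℝ)
    (hpi0 : ∀ x, 0 ≤ pi x) (hq0 : ∀ θ θ', 0 ≤ q θ θ') (θ θ' : α) :
    mhAcceptFn pi q θ θ' ∈ Set.Icc (0:ℝ) 1 := by
  unfold mhAcceptFn
  split
  · next hc =>
    exact ⟨le_min (div_nonneg (mul_nonneg (hpi0 _) (hq0 _ _)) hc.le) zero_le_one,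
      min_le_right _ _⟩
  · exact ⟨zero_le_one, le_refl 1⟩

lemma mh_meas' {α : Type*} [MeasurableSpace α] {pi : α → ℝ} {q : α → α → ℝ}
    (hpi : Measurable pi) (hq : Measurable (fun p : α × α => q p.1 p.2)) :
    Measurable (fun p : α × α => mhAcceptFn pi q p.1 p.2 * q p.1 p.2) := by
  unfold mhAcceptFn
  have h1 : Measurable (fun p : α × α => pi p.1 * q p.1 p.2) :=
    (hpi.comp measurable_fst).mul hq
  have h2 : Measurable (fun p : α × α => pi p.2 * q p.2 p.1) :=
    (hpi.comp measurable_snd).mul (hq.comp measurable_swap)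
  exact (Measurable.ite (measurableSet_lt measurable_const h1)
    ((h2.div h1).min measurable_const) measurable_const).mul hq

lemma F_bounds {α : Type*} (pi : α → ℝ) (q : α → α → ℝ)
    (hpi0 : ∀ x, 0 ≤ pi x) (hq0 : ∀ θ θ', 0 ≤ q θ θ') (θ θ' : α) :
    mhAcceptFn pi q θ θ' * q θ θ' ∈ Set.Icc (0:ℝ) (q θ θ') := by
  obtain ⟨h0, h1⟩ := mh_mem pi q hpi0 hq0 θ θ'
  exact ⟨mul_nonneg h0 (hq0 _ _), by
    simpa using mul_le_mul_of_nonneg_right h1 (hq0 θ θ')⟩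

lemma F_meas {α : Type*} [MeasurableSpace α] {pi : α → ℝ} {q : α → α → ℝ}
    (hpim : Measurable pi) (hq : Measurable (fun p : α × α => q p.1 p.2)) (θ : α) :
    Measurable (fun θ' => mhAcceptFn pi q θ θ' * q θ θ') :=
  (mh_meas' hpim hq).comp (measurable_const.prodMk measurable_id)

lemma F_int {α : Type*} [MeasurableSpace α] (lam : Measure α) {pi : α → ℝ} {q : α → α → ℝ}
    (hpim : Measurable pi) (hpi0 : ∀ x, 0 ≤ pi x)
    (hq : Measurable (fun p : α × α => q p.1 p.2)) (hq0 : ∀ θ θ', 0 ≤ q θ θ')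
    (hqint : ∀ θ, Integrable (q θ) lam) (θ : α) :
    Integrable (fun θ' => mhAcceptFn pi q θ θ' * q θ θ') lam := by
  refine (hqint θ).mono' ((F_meas hpim hq θ).aestronglyMeasurable)
    (Filter.Eventually.of_forall fun θ' => ?_)
  obtain ⟨h0, h1⟩ := F_bounds pi q hpi0 hq0 θ θ'
  rw [Real.norm_eq_abs, abs_of_nonneg h0]; exact h1

lemma A_mem {α : Type*} [MeasurableSpace α] (lam : Measure α) {pi : α → ℝ} {q : α → α → ℝ}
    (hpim : Measurable pi) (hpi0 : ∀ x, 0 ≤ pi x)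
    (hq : Measurable (fun p : α × α => q p.1 p.2)) (hq0 : ∀ θ θ', 0 ≤ q θ θ')
    (hqint : ∀ θ, Integrable (q θ) lam) (hq1 : ∀ θ, (∫ θ', q θ θ' ∂lam) = 1) (θ : α) :
    mhAcceptProb lam pi q θ ∈ Set.Icc (0:ℝ) 1 := by
  constructor
  · exact integral_nonneg fun θ' => (F_bounds pi q hpi0 hq0 θ θ').1
  · rw [mhAcceptProb, ← hq1 θ]
    exact integral_mono (F_int lam hpim hpi0 hq hq0 hqint θ) (hqint θ)
      fun θ' => (F_bounds pi q hpi0 hq0 θ θ').2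

lemma kernel_univ {α : Type*} [MeasurableSpace α] (lam : Measure α) {pi : α → ℝ} {q : α → α → ℝ}
    (hpim : Measurable pi) (hpi0 : ∀ x, 0 ≤ pi x)
    (hq : Measurable (fun p : α × α => q p.1 p.2)) (hq0 : ∀ θ θ', 0 ≤ q θ θ')
    (hqint : ∀ θ, Integrable (q θ) lam) (hq1 : ∀ θ, (∫ θ', q θ θ' ∂lam) = 1) (θ : α) :
    mhKernel lam pi q θ Set.univ = 1 := by
  obtain ⟨hA0, hA1⟩ := A_mem lam hpim hpi0 hq hq0 hqint hq1 θ
  rw [mhKernel, Measure.add_apply, Measure.smul_apply,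
    withDensity_apply _ MeasurableSet.univ, Measure.restrict_univ,
    ← ofReal_integral_eq_lintegral_ofReal (F_int lam hpim hpi0 hq hq0 hqint θ)
      (Filter.Eventually.of_forall fun θ' => (F_bounds pi q hpi0 hq0 θ θ').1)]
  simp only [Measure.dirac_apply_of_mem (Set.mem_univ θ), smul_eq_mul, mul_one]
  rw [show (∫ θ', mhAcceptFn pi q θ θ' * q θ θ' ∂lam) = mhAcceptProb lam pi q θ from rfl,
    ← ENNReal.ofReal_add hA0 (by linarith)]
  norm_num

lemma kernel_meas {α : Type*} [MeasurableSpace α] (lam : Measure α) [SFinite lam]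
    {pi : α → ℝ} {q : α → α → ℝ}
    (hpim : Measurable pi) (hq : Measurable (fun p : α × α => q p.1 p.2)) :
    Measurable (mhKernel lam pi q) := by
  apply Measure.measurable_of_measurable_coe
  intro s hs
  simp only [mhKernel, Measure.add_apply, Measure.smul_apply, withDensity_apply _ hs,
    Measure.dirac_apply' _ hs, smul_eq_mul]
  apply Measurable.add
  · have hrw : ∀ θ : α, (∫⁻ θ' in s, ENNReal.ofReal (mhAcceptFn pi q θ θ' * q θ θ') ∂lam) =
        ∫⁻ θ', (Prod.snd ⁻¹' s).indicator
          (fun p : α × α => ENNReal.ofReal (mhAcceptFn pi q p.1 p.2 * q p.1 p.2)) (θ, θ') ∂lam := by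
      intro θ
      rw [← lintegral_indicator hs]
      refine lintegral_congr fun θ' => ?_
      by_cases hθ' : θ' ∈ s <;> simp [Set.indicator_apply, hθ']
    simp only [hrw]
    exact Measurable.lintegral_prod_right'
      ((ENNReal.measurable_ofReal.comp (mh_meas' hpim hq)).indicator
        (measurable_snd hs))
  · exact ((ENNReal.measurable_ofReal.comp
      (((mh_meas' hpim hq).stronglyMeasurable.integral_prod_right').measurable.const_sub 1))).mul
      (measurable_one.indicator hs)

lemma iter_univ {α : Type*} [MeasurableSpace α] {P : α → Measure α}
    (hk : Measurable P) (hP1 : ∀ θ, P θ Set.univ = 1) :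
    ∀ t θ, iterK P t θ Set.univ = 1 := by
  intro t
  induction t with
  | zero => intro θ; simp [iterK]
  | succ t ih =>
    intro θ
    rw [iterK, Measure.bind_apply MeasurableSet.univ hk.aemeasurable]
    calc (∫⁻ ω, P ω Set.univ ∂(iterK P t θ)) = ∫⁻ _ω, (1:ENNReal) ∂(iterK P t θ) :=
          lintegral_congr fun ω => hP1 ω
      _ = 1 := by rw [lintegral_one, ih θ]

lemma iter_singleton {α : Type*} [MeasurableSpace α] [MeasurableSingletonClass α]
    {P : α → Measure α} (hk : Measurable P) {θ0 : α} {c : ENNReal}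
    (hc : c ≤ P θ0 {θ0}) :
    ∀ t, c ^ t ≤ iterK P t θ0 {θ0} := by
  intro t
  induction t with
  | zero => simp [iterK]
  | succ t ih =>
    rw [iterK, Measure.bind_apply (measurableSet_singleton θ0) hk.aemeasurable]
    calc c ^ (t + 1) = c * c ^ t := by ring
      _ ≤ P θ0 {θ0} * iterK P t θ0 {θ0} := mul_le_mul' hc ih
      _ = ∫⁻ ω in {θ0}, P ω {θ0} ∂(iterK P t θ0) := (lintegral_singleton (fun ω => P ω {θ0}) θ0).symm
      _ ≤ ∫⁻ ω, P ω {θ0} ∂(iterK P t θ0) := setLIntegral_le_lintegral _ _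

lemma strong_convex_lower {d : ℕ} {Θ : Set (Fin d → ℝ)} (hΘconv : Convex ℝ Θ)
    {ξ : ℝ} (hξ : 0 < ξ) {f : (Fin d → ℝ) → ℝ}
    (hsc : ConvexOn ℝ Θ (fun θ => f θ - (∑ i, θ i ^ 2) / (2 * ξ)))
    {θstar : Fin d → ℝ} (hθstar : θstar ∈ Θ) (hmin : ∀ θ ∈ Θ, f θstar ≤ f θ)
    {θ' : Fin d → ℝ} (hθ' : θ' ∈ Θ) :
    (∑ i, (θ' i - θstar i) ^ 2) / (2 * ξ) ≤ f θ' - f θstar := by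
  set s : ℝ := ∑ i, (θ' i - θstar i) ^ 2 with hs_def
  have hs0 : 0 ≤ s := Finset.sum_nonneg fun i _ => sq_nonneg _
  have hc : (0:ℝ) < 2 * ξ := by linarith
  have hD0 : 0 ≤ f θ' - f θstar := by linarith [hmin θ' hθ']
  have key : ∀ t : ℝ, 0 < t → t < 1 → (1 - t) * (s / (2 * ξ)) ≤ f θ' - f θstar := by
    intro t ht0 ht1
    have h1t : (0:ℝ) ≤ 1 - t := by linarith
    have hmem : (1 - t) • θstar + t • θ' ∈ Θ := hΘconv hθstar hθ' h1t ht0.le (by ring)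
    have hcvx := hsc.2 hθstar hθ' h1t ht0.le (by ring : (1 - t) + t = 1)
    simp only [smul_eq_mul] at hcvx
    have hquad : ∑ i, (((1 - t) • θstar + t • θ') i) ^ 2
        = (1 - t) * (∑ i, θstar i ^ 2) + t * (∑ i, θ' i ^ 2) - t * (1 - t) * s := by
      rw [hs_def, Finset.mul_sum, Finset.mul_sum, Finset.mul_sum, ← Finset.sum_add_distrib,
        ← Finset.sum_sub_distrib]
      refine Finset.sum_congr rfl fun i _ => ?_
      simp only [Pi.add_apply, Pi.smul_apply, smul_eq_mul]
      ring
    rw [hquad] at hcvx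
    have hfmin := hmin _ hmem
    have H := mul_le_mul_of_nonneg_right hcvx hc.le
    have Hf := mul_le_mul_of_nonneg_right hfmin hc.le
    field_simp at H
    rw [mul_div_assoc' (1-t) s (2*ξ), div_le_iff₀ hc]
    nlinarith [H, Hf, ht0, hs0, mul_pos ht0 hc]
  by_contra hcon
  push_neg at hcon
  have hcpos : 0 < s / (2 * ξ) := lt_of_le_of_lt hD0 hcon
  set D := f θ' - f θstar with hD_def
  set c := s / (2 * ξ) with hc_def
  have hDc : D < c := hcon
  have ht0 : 0 < (c - D) / (2 * c) := div_pos (by linarith) (by linarith)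
  have ht1 : (c - D) / (2 * c) < 1 := by
    rw [div_lt_one (by linarith)]; linarith
  have := key _ ht0 ht1
  have hex : (1 - (c - D) / (2 * c)) * c = c - (c - D) / 2 := by
    field_simp
  rw [hex] at this
  nlinarith [this, hDc]

lemma rpow_combine (h ξ : ℝ) (hh : 0 < h) (hξ : 0 < ξ) (d : ℕ) :
    (2 * Real.pi * h) ^ (-(d:ℝ)/2) * (Real.pi * (2 * h * ξ / (h + ξ))) ^ ((d:ℝ)/2)
      = (1 + h / ξ) ^ (-(d:ℝ)/2) := by
  have hC : (0:ℝ) < 2 * Real.pi * h := by positivity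
  have hhξ : (0:ℝ) < h + ξ := by linarith
  have hB0 : (0:ℝ) < 1 + h / ξ := by positivity
  have hπe : (0:ℝ) ≤ Real.pi * (2 * h * ξ / (h + ξ)) := by positivity
  rw [neg_div, Real.rpow_neg hC.le, Real.rpow_neg hB0.le, inv_mul_eq_div,
    ← Real.div_rpow hπe hC.le, ← Real.inv_rpow hB0.le]
  congr 1
  rw [eq_comm, inv_eq_iff_eq_inv, eq_comm]
  field_simp
  ring

end AuxRWMH

/-- Corollary 2: for RWMH with a `ξ⁻¹`-strongly convex potential on convex `Θ`, if `θ*`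
maximizes `π`, then `A(θ*) ≤ (1 + h/ξ)^{−d/2}` and hence
`‖P^t(θ*,·) − Π‖_TV ≥ (1 − (1 + h/ξ)^{−d/2})^t` for every `t ∈ ℤ₊`. -/
theorem rwmh_strongly_convex_tv_lower_bound_at_max
    {d : ℕ} (hd : 0 < d) (h ξ : ℝ) (hh : 0 < h) (hξ : 0 < ξ)
    (Θ : Set (Fin d → ℝ)) (hΘne : Θ.Nonempty) (hΘconv : Convex ℝ Θ)
    (hΘmeas : MeasurableSet Θ)
    (f : (Fin d → ℝ) → ℝ) (hfm : Measurable f)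
    (hsc : ConvexOn ℝ Θ (fun θ => f θ - (∑ i, θ i ^ 2) / (2 * ξ)))
    (hfint : IntegrableOn (fun θ => Real.exp (-f θ)) Θ volume)
    (hZ : 0 < ∫ x in Θ, Real.exp (-f x))
    (θstar : Fin d → ℝ) (hθstar : θstar ∈ Θ)
    (hmax : ∀ θ ∈ Θ, logConcaveTarget Θ f θ ≤ logConcaveTarget Θ f θstar) :
    mhAcceptProb volume (logConcaveTarget Θ f) (rwProposal h d) θstar ≤
        (1 + h / ξ) ^ (-(d : ℝ) / 2) ∧
      ∀ t : ℕ, 1 ≤ t →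
        (1 - (1 + h / ξ) ^ (-(d : ℝ) / 2)) ^ t ≤
          tvDist
            (iterK (mhKernel volume (logConcaveTarget Θ f) (rwProposal h d)) t θstar)
            (volume.withDensity (fun x => ENNReal.ofReal (logConcaveTarget Θ f x))) := by
  classical
  haveI : Nonempty (Fin d) := ⟨⟨0, hd⟩⟩
  set pi := logConcaveTarget Θ f with hpi_def
  set q := rwProposal h d with hq_def
  set B := (1 + h / ξ) ^ (-(d:ℝ)/2) with hB_def
  have hpim : Measurable pi :=
    ((Real.measurable_exp.comp hfm.neg).div_const _).indicator hΘmeas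
  have hpi0 : ∀ x, 0 ≤ pi x :=
    Set.indicator_nonneg (fun y _ => div_nonneg (Real.exp_pos _).le hZ.le)
  have hqm : Measurable fun p : (Fin d → ℝ) × (Fin d → ℝ) => q p.1 p.2 := rw_meas h d
  have hq0 : ∀ θ θ', 0 ≤ q θ θ' := fun θ θ' => (rw_pos h hh d θ θ').le
  have h2h : (0:ℝ) < 2 * h := by linarith
  have hC : (0:ℝ) < 2 * Real.pi * h := by positivity
  have hqint : ∀ θ, Integrable (q θ) volume := fun θ =>
    (gauss_integrable d (2*h) h2h θ).const_mul ((2 * Real.pi * h) ^ (-(d:ℝ)/2))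
  have hq1 : ∀ θ, (∫ θ', q θ θ') = 1 := by
    intro θ
    rw [hq_def]
    unfold rwProposal
    rw [integral_const_mul, gauss_integral d (2*h) h2h θ,
      show Real.pi * (2*h) = 2 * Real.pi * h by ring, ← Real.rpow_add hC,
      show (-(d:ℝ)/2 + (d:ℝ)/2) = 0 by ring, Real.rpow_zero]
  have hπθstar : pi θstar = Real.exp (-f θstar) / (∫ x in Θ, Real.exp (-f x)) := by
    rw [hpi_def, logConcaveTarget, Set.indicator_of_mem hθstar]
  have hπpos : 0 < pi θstar := by rw [hπθstar]; positivity
  have hmin : ∀ θ ∈ Θ, f θstar ≤ f θ := by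
    intro θ hθ
    have hm := hmax θ hθ
    rw [hpi_def, logConcaveTarget, Set.indicator_of_mem hθ, Set.indicator_of_mem hθstar] at hm
    have h1 := (div_le_div_iff_of_pos_right hZ).mp hm
    have h2 := Real.exp_le_exp.mp h1
    linarith
  set e : ℝ := 2 * h * ξ / (h + ξ) with he_def
  have hhξ : (0:ℝ) < h + ξ := by linarith
  have he : 0 < e := by rw [he_def]; positivity
  have hgfun : ∀ x : Fin d → ℝ,
      Real.exp (-(∑ i, (x i - θstar i) ^ 2) / (2 * ξ)) * q θstar x
        = (2 * Real.pi * h) ^ (-(d:ℝ)/2) * Real.exp (-(∑ i, (x i - θstar i) ^ 2) / e) := by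
    intro x
    rw [hq_def]
    unfold rwProposal
    rw [mul_comm (Real.exp _), mul_assoc, ← Real.exp_add]
    congr 2
    rw [he_def]
    field_simp
    ring
  have hgint : Integrable (fun x : Fin d → ℝ =>
      Real.exp (-(∑ i, (x i - θstar i) ^ 2) / (2 * ξ)) * q θstar x) volume := by
    refine ((gauss_integrable d e he θstar).const_mul
      ((2 * Real.pi * h) ^ (-(d:ℝ)/2))).congr
      (Filter.Eventually.of_forall fun x => (hgfun x).symm)
  have hgval : (∫ x : Fin d → ℝ,
      Real.exp (-(∑ i, (x i - θstar i) ^ 2) / (2 * ξ)) * q θstar x) = B := by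
    rw [integral_congr_ae (Filter.Eventually.of_forall hgfun), integral_const_mul,
      gauss_integral d e he θstar, hB_def, he_def]
    exact rpow_combine h ξ hh hξ d
  -- pointwise bound on the acceptance integrand
  have hpoint : ∀ x : Fin d → ℝ, mhAcceptFn pi q θstar x * q θstar x ≤
      Real.exp (-(∑ i, (x i - θstar i) ^ 2) / (2 * ξ)) * q θstar x := by
    intro x
    refine mul_le_mul_of_nonneg_right ?_ (hq0 _ _)
    have hcond : 0 < pi θstar * q θstar x := mul_pos hπpos (rw_pos h hh d θstar x)
    rw [mhAcceptFn, if_pos hcond]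
    by_cases hx : x ∈ Θ
    · refine le_trans (min_le_left _ _) ?_
      rw [show q x θstar = q θstar x from rw_symm h d θstar x,
        mul_div_mul_right _ _ (ne_of_gt (rw_pos h hh d θstar x))]
      have hπx : pi x = Real.exp (-f x) / (∫ y in Θ, Real.exp (-f y)) := by
        rw [hpi_def, logConcaveTarget, Set.indicator_of_mem hx]
      rw [hπx, hπθstar, div_div_div_cancel_right₀ (ne_of_gt hZ), ← Real.exp_sub]
      refine Real.exp_le_exp.mpr ?_
      have hkey := strong_convex_lower hΘconv hξ hsc hθstar hmin hx
      rw [neg_div]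
      linarith
    · have hπx : pi x = 0 := by
        rw [hpi_def, logConcaveTarget, Set.indicator_of_notMem hx]
      rw [hπx, zero_mul, zero_div]
      exact le_trans (min_le_left _ _) (Real.exp_pos _).le
  have hA1 : mhAcceptProb volume pi q θstar ≤ B := by
    rw [mhAcceptProb, ← hgval]
    exact integral_mono_of_nonneg
      (Filter.Eventually.of_forall fun x => (F_bounds pi q hpi0 hq0 θstar x).1)
      hgint (Filter.Eventually.of_forall hpoint)
  refine ⟨hA1, ?_⟩
  -- Part 2
  have hB0 : 0 ≤ B := Real.rpow_nonneg (by positivity) _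
  have hB1 : B ≤ 1 := by
    refine Real.rpow_le_one_of_one_le_of_nonpos ?_ ?_
    · have : 0 ≤ h / ξ := div_nonneg hh.le hξ.le
      linarith
    · have : (0:ℝ) ≤ (d:ℝ) := Nat.cast_nonneg d
      linarith
  have hker1 : ∀ θ, mhKernel volume pi q θ Set.univ = 1 := fun θ =>
    kernel_univ volume hpim hpi0 hqm hq0 hqint hq1 θ
  have hkerm : Measurable (mhKernel volume pi q) := kernel_meas volume hpim hqm
  have hAθ := A_mem volume hpim hpi0 hqm hq0 hqint hq1 θstar
  have hPsing : ENNReal.ofReal (1 - B) ≤ mhKernel volume pi q θstar {θstar} := by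
    rw [mhKernel, Measure.add_apply, Measure.smul_apply,
      withDensity_apply _ (measurableSet_singleton _),
      Measure.restrict_eq_zero.mpr (measure_singleton θstar), lintegral_zero_measure,
      zero_add, Measure.dirac_apply_of_mem (Set.mem_singleton _), smul_eq_mul, mul_one]
    exact ENNReal.ofReal_le_ofReal (by linarith)
  intro t _
  set μt := iterK (mhKernel volume pi q) t θstar with hμt_def
  have hμuniv : μt Set.univ = 1 := iter_univ hkerm hker1 t θstar
  haveI : IsFiniteMeasure μt := ⟨by rw [hμuniv]; exact ENNReal.one_lt_top⟩
  have hsing : ENNReal.ofReal (1 - B) ^ t ≤ μt {θstar} := iter_singleton hkerm hPsing t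
  set ν := volume.withDensity (fun x => ENNReal.ofReal (pi x)) with hν_def
  have hν0 : ν {θstar} = 0 := by
    rw [hν_def, withDensity_apply _ (measurableSet_singleton _),
      Measure.restrict_eq_zero.mpr (measure_singleton θstar), lintegral_zero_measure]
  set g : (Fin d → ℝ) → ℝ := Set.indicator {θstar} 1 with hg_def
  have hgm : Measurable g := measurable_one.indicator (measurableSet_singleton _)
  have hgmem : ∀ x, g x ∈ Set.Icc (0:ℝ) 1 := by
    intro x
    rw [hg_def]
    by_cases hx : x ∈ ({θstar} : Set (Fin d → ℝ)) <;>
      simp [Set.indicator_apply, hx]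
  rw [tvDist]
  have hbdd : BddAbove (Set.range fun
      (F : {F : (Fin d → ℝ) → ℝ // Measurable F ∧ ∀ x, F x ∈ Set.Icc (0:ℝ) 1}) =>
      (∫ x, F.1 x ∂μt) - ∫ x, F.1 x ∂ν) := by
    refine ⟨1, ?_⟩
    rintro y ⟨F, rfl⟩
    have h1 : (0:ℝ) ≤ ∫ x, F.1 x ∂ν := integral_nonneg fun x => (F.2.2 x).1
    have h2 : (∫ x, F.1 x ∂μt) ≤ 1 := by
      calc (∫ x, F.1 x ∂μt) ≤ ∫ _x, (1:ℝ) ∂μt :=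
            integral_mono_of_nonneg (Filter.Eventually.of_forall fun x => (F.2.2 x).1)
              (integrable_const 1) (Filter.Eventually.of_forall fun x => (F.2.2 x).2)
        _ = 1 := by rw [integral_const, measureReal_def, hμuniv]; simp
    show (∫ x, F.1 x ∂μt) - (∫ x, F.1 x ∂ν) ≤ 1
    linarith
  refine le_trans ?_ (le_ciSup hbdd ⟨g, hgm, hgmem⟩)
  have hIμ : (∫ x, g x ∂μt) = (μt {θstar}).toReal :=
    integral_indicator_one (measurableSet_singleton _)
  have hIν : (∫ x, g x ∂ν) = 0 := by
    rw [hg_def, integral_indicator_one (measurableSet_singleton _), measureReal_def, hν0]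
    simp
  show (1 - B) ^ t ≤ (∫ x, g x ∂μt) - ∫ x, g x ∂ν
  rw [hIμ, hIν, sub_zero]
  have h1B : 0 ≤ 1 - B := by linarith
  have hne : μt {θstar} ≠ ⊤ := by
    refine ne_of_lt (lt_of_le_of_lt (measure_mono (Set.subset_univ _)) ?_)
    rw [hμuniv]
    exact ENNReal.one_lt_top
  calc (1 - B) ^ t = ((ENNReal.ofReal (1 - B)) ^ t).toReal := by
        rw [ENNReal.toReal_pow, ENNReal.toReal_ofReal h1B]
    _ ≤ (μt {θstar}).toReal := ENNReal.toReal_mono hne hsing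
end
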